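/- Let n ≥ 2, let (a,b) ⊆ ℝ be a (finite or infinite) open interval, and let G, P be monic real polynomials of degree n and Q a monic real polynomial of degree n+1, all of whose zeros are real and lie in (a,b), with the zeros of G and of Q simple. Denote the zeros of G by x_1 < ⋯ < x_n and the zeros of Q by y_1 < ⋯ < y_{n+1}, and assume Q ≺ G, i.e. y_1 < x_1 < y_2 < x_2 < ⋯ < y_n < x_n < y_{n+1}. Suppose there exist E ∈ ℝ and continuous functions A, B on (a,b) with A(x) > 0 for all x ∈ (a,b), such that A(x)P(x) = B(x)G(x) − (x−E)Q(x) for all x ∈ (a,b). Assume B(E) ≠ 0 and that G and P have no common zero. Then: if E < x_1, the zeros t_1 < ⋯ < t_n of P satisfy t_1 < x_1 < t_2 < x_2 < ⋯ < t_n < x_n (i.e. P ≺ G); and if E > x_n, they satisfy x_1 < t_1 < x_2 < t_2 < ⋯ < x_n < t_n (i.e. G ≺ P). -/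

import Mathlib

open Polynomial
open Polynomial

lemma negOnePow_cases (k : ℕ) : (-1:ℝ)^k = 1 ∨ (-1:ℝ)^k = -1 := by
  rcases Nat.even_or_odd k with h | h
  · left; exact h.neg_one_pow
  · right; exact h.neg_one_pow

lemma sign_flip {v : ℝ} {j k : ℕ} (h1 : 0 < (-1:ℝ)^j * v) (h2 : (-1:ℝ)^k * v < 0) :
    (-1:ℝ)^j = -(-1:ℝ)^k := by
  rcases negOnePow_cases j with hj | hj <;> rcases negOnePow_cases k with hk | hk <;>
    rw [hj] at h1 ⊢ <;> rw [hk] at h2 ⊢ <;> norm_num at * <;> linarith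

lemma sign_same {v : ℝ} {j k : ℕ} (h1 : 0 < (-1:ℝ)^j * v) (h2 : 0 < (-1:ℝ)^k * v) :
    (-1:ℝ)^j = (-1:ℝ)^k := by
  rcases negOnePow_cases j with hj | hj <;> rcases negOnePow_cases k with hk | hk <;>
    rw [hj] at h1 ⊢ <;> rw [hk] at h2 ⊢ <;> norm_num at * <;> linarith

lemma prod_sign (u : ℝ) (s : Multiset ℝ) (hne : ∀ r ∈ s, r ≠ u) :
    0 < (-1:ℝ)^((s.filter (fun r => u < r)).card) * (s.map (fun r => u - r)).prod := by
  classical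
  induction s using Multiset.induction_on with
  | empty => simp
  | cons r s ih =>
    have hr : r ≠ u := hne r (Multiset.mem_cons_self r s)
    have ih' := ih (fun q hq => hne q (Multiset.mem_cons_of_mem hq))
    rcases lt_or_gt_of_ne hr with hlt | hgt
    · have : ((r ::ₘ s).filter (fun r => u < r)).card = (s.filter (fun r => u < r)).card := by
        rw [Multiset.filter_cons_of_neg _ (by simpa using hlt.not_gt)]
      rw [this, Multiset.map_cons, Multiset.prod_cons]
      have hpos : 0 < u - r := by linarith
      nlinarith [mul_pos hpos ih']
    · have : ((r ::ₘ s).filter (fun r => u < r)).card = (s.filter (fun r => u < r)).card + 1 := by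
        rw [Multiset.filter_cons_of_pos _ (by simpa using hgt)]; simp
      rw [this, Multiset.map_cons, Multiset.prod_cons]
      have hpos : 0 < r - u := by linarith
      rw [pow_succ]
      nlinarith [mul_pos hpos ih']

lemma sorted_le_getElem {L : List ℝ} (hL : L.Pairwise (· ≤ ·)) {i j : ℕ}
    (hij : i ≤ j) (hj : j < L.length) : L[i]'(lt_of_le_of_lt hij hj) ≤ L[j] := by
  rcases eq_or_lt_of_le hij with rfl | h
  · exact le_refl _
  · exact List.pairwise_iff_getElem.mp hL i j (lt_of_le_of_lt hij hj) hj h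

lemma sorted_getD_lt_iff (L : List ℝ) (hL : L.Pairwise (· ≤ ·)) (u : ℝ)
    (hne : ∀ r ∈ L, r ≠ u) (m : ℕ)
    (hm : L.countP (fun r => decide (u < r)) = m)
    (k : ℕ) (hk : k < L.length) : L.getD k 0 < u ↔ k < L.length - m := by
  have hsplit : ∀ j : ℕ, L.countP (fun r => decide (u < r)) =
      (L.take j).countP (fun r => decide (u < r)) + (L.drop j).countP (fun r => decide (u < r)) := by
    intro j
    conv_lhs => rw [← List.take_append_drop j L, List.countP_append]
  rw [List.getD_eq_getElem L 0 hk]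
  constructor
  · intro hlt
    by_contra hge
    push_neg at hge
    have htake : (L.take (k+1)).countP (fun r => decide (u < r)) = 0 := by
      rw [List.countP_eq_zero]
      intro r hr
      rw [List.mem_iff_getElem] at hr
      obtain ⟨j, hjlen, rfl⟩ := hr
      have hjk : j ≤ k := by
        have := hjlen
        simp [List.length_take] at this
        omega
      have hjL : j < L.length := lt_of_le_of_lt hjk hk
      rw [List.getElem_take]
      have : L[j] ≤ L[k] := sorted_le_getElem hL hjk hk
      simp only [decide_eq_true_eq]
      exact not_lt.mpr (by linarith)
    have hdroplen : (L.drop (k+1)).length = L.length - (k+1) := List.length_drop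
    have : m ≤ L.length - (k+1) := by
      rw [← hm, hsplit (k+1), htake, zero_add, ← hdroplen]
      exact List.countP_le_length
    omega
  · intro hklt
    by_contra hge
    push_neg at hge
    have hne' : L[k] ≠ u := hne _ (List.getElem_mem hk)
    have hgt : u < L[k] := lt_of_le_of_ne hge (Ne.symm hne')
    have hdrop : (L.drop k).countP (fun r => decide (u < r)) = (L.drop k).length := by
      rw [List.countP_eq_length]
      intro r hr
      rw [List.mem_iff_getElem] at hr
      obtain ⟨j, hjlen, rfl⟩ := hr
      rw [List.getElem_drop]
      have hkj : k ≤ k + j := Nat.le_add_right _ _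
      have hlen : k + j < L.length := by
        have := hjlen; rw [List.length_drop] at this; omega
      have : L[k] ≤ L[k+j] := sorted_le_getElem hL hkj hlen
      simp only [decide_eq_true_eq]
      linarith
    have : L.length - k ≤ m := by
      rw [← hm, hsplit k, hdrop, List.length_drop]
      omega
    omega

lemma chain_c (n : ℕ) (c : ℕ → ℕ) (hdec : ∀ i, i + 1 < n → c (i+1) < c i) :
    ∀ d i, i + d < n → c (i + d) + d ≤ c i := by
  intro d
  induction d with
  | zero => intro i _; simp
  | succ d ih =>
    intro i h
    have h1 : c (i + d + 1) < c (i + d) := hdec (i+d) (by omega)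
    have h2 := ih i (by omega)
    show c (i + d + 1) + (d + 1) ≤ c i
    omega

lemma negOnePow_ne_neg (k : ℕ) : (-1:ℝ)^k ≠ -(-1:ℝ)^k := by
  rcases negOnePow_cases k with h | h <;> rw [h] <;> norm_num

theorem stmt_3 (n : ℕ) (hn : 2 ≤ n) (a b : EReal)
    (G Q P : Polynomial ℝ) (E : ℝ) (A B : ℝ → ℝ)
    (x y : ℕ → ℝ)
    (hGmonic : G.Monic) (hGdeg : G.natDegree = n)
    (hPmonic : P.Monic) (hPdeg : P.natDegree = n)
    (hQmonic : Q.Monic) (hQdeg : Q.natDegree = n + 1)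
    (hPreal : P.roots.card = n)
    (hPab : ∀ r : ℝ, P.eval r = 0 → a < (r : EReal) ∧ (r : EReal) < b)
    (hx : ∀ i j : ℕ, i < j → j < n → x i < x j)
    (hy : ∀ i j : ℕ, i < j → j ≤ n → y i < y j)
    (hGroots : ∀ r : ℝ, G.eval r = 0 ↔ ∃ i < n, x i = r)
    (hQroots : ∀ r : ℝ, Q.eval r = 0 ↔ ∃ i ≤ n, y i = r)
    (hxab : ∀ i < n, a < (x i : EReal) ∧ (x i : EReal) < b)
    (hyab : ∀ i ≤ n, a < (y i : EReal) ∧ (y i : EReal) < b)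
    (hQG1 : ∀ i < n, y i < x i)
    (hQG2 : ∀ i < n, x i < y (i + 1))
    (hA : ContinuousOn A {t : ℝ | a < (t : EReal) ∧ (t : EReal) < b})
    (hB : ContinuousOn B {t : ℝ | a < (t : EReal) ∧ (t : EReal) < b})
    (hApos : ∀ t : ℝ, a < (t : EReal) → (t : EReal) < b → 0 < A t)
    (hrel : ∀ t : ℝ, a < (t : EReal) → (t : EReal) < b →
        A t * P.eval t = B t * G.eval t - (t - E) * Q.eval t)
    (hBE : B E ≠ 0)
    (hcommon : ∀ r : ℝ, ¬(G.eval r = 0 ∧ P.eval r = 0)) :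
    (E < x 0 →
      ∃ t : ℕ → ℝ, (∀ i j : ℕ, i < j → j < n → t i < t j) ∧
        (∀ r : ℝ, P.eval r = 0 ↔ ∃ i < n, t i = r) ∧
        (∀ i < n, t i < x i) ∧ (∀ i < n - 1, x i < t (i + 1))) ∧
    (x (n - 1) < E →
      ∃ t : ℕ → ℝ, (∀ i j : ℕ, i < j → j < n → t i < t j) ∧
        (∀ r : ℝ, P.eval r = 0 ↔ ∃ i < n, t i = r) ∧
        (∀ i < n, x i < t i) ∧ (∀ i < n - 1, t i < x (i + 1))) := by

  classical
  -- P is nonzero and splits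
  have hPne0 : P ≠ 0 := hPmonic.ne_zero
  have hProotscard : Multiset.card P.roots = P.natDegree := by rw [hPreal, hPdeg]
  have hPprod : (P.roots.map fun a => X - C a).prod = P := by
    have h := Polynomial.C_leadingCoeff_mul_prod_multiset_X_sub_C (p := P) hProotscard
    rwa [hPmonic.leadingCoeff, map_one, one_mul] at h
  have hPeval : ∀ u : ℝ, P.eval u = (P.roots.map (fun r => u - r)).prod := by
    intro u
    conv_lhs => rw [← hPprod]
    rw [eval_multiset_prod, Multiset.map_map]
    congr 1
    apply Multiset.map_congr rfl
    intro r _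
    simp
  -- Q is the product over its roots y
  have hyinj : ∀ j k : ℕ, j ≤ n → k ≤ n → y j = y k → j = k := by
    intro j k hj hk h
    by_contra hne
    rcases Nat.lt_or_ge j k with hlt | hge
    · exact absurd h (ne_of_lt (hy j k hlt hk))
    · have : k < j := by omega
      exact absurd h.symm (ne_of_lt (hy k j this hj))
  set R : Polynomial ℝ := ∏ j ∈ Finset.range (n+1), (X - C (y j)) with hRdef
  have hRmonic : R.Monic := monic_prod_of_monic _ _ (fun j _ => monic_X_sub_C _)
  have hRdeg : R.natDegree = n + 1 := by
    rw [hRdef, natDegree_prod_of_monic _ _ (fun j _ => monic_X_sub_C _)]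
    simp
  have hReval0 : ∀ j ≤ n, R.eval (y j) = 0 := by
    intro j hj
    rw [hRdef, eval_prod]
    apply Finset.prod_eq_zero (Finset.mem_range.mpr (by omega : j < n + 1))
    simp
  have hQR : Q = R := by
    by_contra hne
    have hsub : Q - R ≠ 0 := sub_ne_zero.mpr hne
    have hle : (Q - R).natDegree ≤ n + 1 := by
      refine le_trans (natDegree_sub_le _ _) ?_
      rw [hQdeg, hRdeg]; omega
    have hd : (Q - R).natDegree < n + 1 := by
      rcases lt_or_eq_of_le hle with h | h
      · exact h
      · exfalso
        have hlc : (Q - R).leadingCoeff = 0 := by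
          rw [leadingCoeff, h, coeff_sub]
          have h1 : Q.coeff (n+1) = 1 := by
            have := hQmonic.coeff_natDegree
            rwa [hQdeg] at this
          have h2 : R.coeff (n+1) = 1 := by
            have := hRmonic.coeff_natDegree
            rwa [hRdeg] at this
          rw [h1, h2]; ring
        exact leadingCoeff_ne_zero.mpr hsub hlc
    have hz : Q - R = 0 := by
      apply Polynomial.eq_zero_of_natDegree_lt_card_of_eval_eq_zero (Q - R)
          (f := fun j : Fin (n+1) => y (j : ℕ))
      · intro j k h
        exact Fin.ext (hyinj _ _ (by omega) (by omega) h)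
      · intro j
        have hj : (j : ℕ) ≤ n := by omega
        rw [eval_sub, hReval0 _ hj, (hQroots _).mpr ⟨j, hj, rfl⟩, sub_zero]
      · simpa using hd
    exact hsub hz
  have hQeval : ∀ u : ℝ, Q.eval u = ∏ j ∈ Finset.range (n+1), (u - y j) := by
    intro u
    rw [hQR, hRdef, eval_prod]
    simp
  -- sign of Q at x i
  have qsign : ∀ i < n, 0 < (-1:ℝ)^(n - i) * Q.eval (x i) := by
    intro i hi
    have hylt : ∀ j ≤ n, j ≤ i → y j < x i := by
      intro j hj hji
      rcases eq_or_lt_of_le hji with heq | h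
      · rw [heq]; exact hQG1 i hi
      · exact lt_trans (hy j i h (by omega)) (hQG1 i hi)
    have hygt : ∀ j ≤ n, i < j → x i < y j := by
      intro j hj hij
      rcases eq_or_lt_of_le (by omega : i + 1 ≤ j) with h | h
      · rw [← h]; exact hQG2 i hi
      · exact lt_trans (hQG2 i hi) (hy (i+1) j h hj)
    set s : Multiset ℝ := (Finset.range (n+1)).val.map y with hsdef
    have hne : ∀ r ∈ s, r ≠ x i := by
      intro r hr
      rw [hsdef, Multiset.mem_map] at hr
      obtain ⟨j, hj, rfl⟩ := hr
      have hjn : j ≤ n := by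
        have : j ∈ Finset.range (n+1) := hj
        have := Finset.mem_range.mp this
        omega
      rcases le_or_gt j i with h | h
      · exact ne_of_lt (hylt j hjn h)
      · exact ne_of_gt (hygt j hjn h)
    have h1 := prod_sign (x i) s hne
    have hprodeq : (s.map (fun r => x i - r)).prod = Q.eval (x i) := by
      rw [hQeval, Finset.prod_eq_multiset_prod, hsdef, Multiset.map_map]
      rfl
    have hfilter : (s.filter (fun r => x i < r)).card = n - i := by
      rw [hsdef, Multiset.filter_map]
      rw [Multiset.card_map]
      have : Multiset.filter ((fun r => x i < r) ∘ y) (Finset.range (n+1)).val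
          = (Finset.filter (fun j => x i < y j) (Finset.range (n+1))).val := by
        rw [Finset.filter_val]
        rfl
      rw [this]
      have hset : Finset.filter (fun j => x i < y j) (Finset.range (n+1))
          = Finset.Ico (i+1) (n+1) := by
        ext j
        simp only [Finset.mem_filter, Finset.mem_range, Finset.mem_Ico]
        constructor
        · rintro ⟨hj, hlt⟩
          refine ⟨?_, hj⟩
          by_contra h
          push_neg at h
          have := hylt j (by omega) (by omega)
          linarith
        · rintro ⟨h1', h2'⟩
          exact ⟨h2', hygt j (by omega) (by omega)⟩
      rw [hset]
      simp [Nat.card_Ico]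
    rw [hfilter, hprodeq] at h1
    exact h1
  -- Q at x i is nonzero, x i - E sign, and the relation
  have hGxi : ∀ i < n, G.eval (x i) = 0 := fun i hi => (hGroots _).mpr ⟨i, hi, rfl⟩
  have hPxi_ne : ∀ i < n, ∀ r ∈ P.roots, r ≠ x i := by
    intro i hi r hr h
    subst h
    exact hcommon (x i) ⟨hGxi i hi, (Polynomial.mem_roots hPne0).mp hr⟩
  have hrelx : ∀ i < n, A (x i) * P.eval (x i) = -((x i - E) * Q.eval (x i)) := by
    intro i hi
    have h := hrel (x i) (hxab i hi).1 (hxab i hi).2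
    rw [hGxi i hi] at h
    rw [h]; ring
  have hApos' : ∀ i < n, 0 < A (x i) := fun i hi => hApos _ (hxab i hi).1 (hxab i hi).2
  -- the sorted list of roots of P
  set L : List ℝ := P.roots.sort (· ≤ ·) with hLdef
  have hLsorted : L.Pairwise (· ≤ ·) := P.roots.pairwise_sort _
  have hLlen : L.length = n := by rw [hLdef, Multiset.length_sort, hPreal]
  have hLcoe : (L : Multiset ℝ) = P.roots := Multiset.sort_eq _ _
  have hLmem : ∀ r, r ∈ L ↔ r ∈ P.roots := by
    intro r; rw [← hLcoe]; exact Iff.rfl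
  set c : ℕ → ℕ := fun i => Multiset.card (P.roots.filter (fun r => x i < r)) with hcdef
  have psign : ∀ i < n, 0 < (-1:ℝ)^(c i) * P.eval (x i) := by
    intro i hi
    have h1 := prod_sign (x i) P.roots (hPxi_ne i hi)
    rw [← hPeval (x i)] at h1
    exact h1
  have hcount : ∀ i, L.countP (fun r => decide (x i < r)) = c i := by
    intro i
    show _ = Multiset.card (Multiset.filter (fun r => x i < r) P.roots)
    rw [← hLcoe, Multiset.filter_coe, Multiset.coe_card, List.countP_eq_length_filter]
  have hcmono : ∀ i, i + 1 < n → c (i+1) ≤ c i := by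
    intro i h
    apply Multiset.card_le_card
    apply Multiset.monotone_filter_right
    intro r hr
    exact lt_trans (hx i (i+1) (by omega) h) hr
  have hcle : ∀ i, c i ≤ n := by
    intro i
    calc Multiset.card (P.roots.filter (fun r => x i < r)) ≤ Multiset.card P.roots :=
      Multiset.card_le_card (Multiset.filter_le _ _)
    _ = n := hPreal
  have hkey : ∀ i < n, ∀ k < n, (L.getD k 0 < x i ↔ k < n - c i) := by
    intro i hi k hk
    have := sorted_getD_lt_iff L hLsorted (x i)
      (fun r hr => hPxi_ne i hi r ((hLmem r).mp hr)) (c i) (hcount i) k (by omega)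
    rwa [hLlen] at this
  have htne : ∀ i < n, ∀ k < n, L.getD k 0 ≠ x i := by
    intro i hi k hk
    have hmem : L.getD k 0 ∈ L := by
      rw [List.getD_eq_getElem L 0 (by omega)]
      exact List.getElem_mem _
    exact hPxi_ne i hi _ ((hLmem _).mp hmem)
  have hrootiff : ∀ r : ℝ, P.eval r = 0 ↔ ∃ k < n, L.getD k 0 = r := by
    intro r
    constructor
    · intro h
      have hmem : r ∈ L := (hLmem r).mpr ((Polynomial.mem_roots hPne0).mpr h)
      rw [List.mem_iff_getElem] at hmem
      obtain ⟨k, hklen, hkr⟩ := hmem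
      exact ⟨k, by omega, by rw [List.getD_eq_getElem L 0 hklen]; exact hkr⟩
    · rintro ⟨k, hk, rfl⟩
      have hmem : L.getD k 0 ∈ L := by
        rw [List.getD_eq_getElem L 0 (by omega)]
        exact List.getElem_mem _
      exact (Polynomial.mem_roots hPne0).mp ((hLmem _).mp hmem)
  constructor
  · -- Case E < x 0
    intro hE
    have hxE : ∀ i < n, E < x i := by
      intro i hi
      rcases Nat.eq_zero_or_pos i with rfl | h
      · exact hE
      · exact lt_trans hE (hx 0 i h hi)
    have parity : ∀ i < n, (-1:ℝ)^(c i) = -(-1:ℝ)^(n - i) := by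
      intro i hi
      apply sign_flip (psign i hi)
      have hq := qsign i hi
      have hr := hrelx i hi
      have hxe := hxE i hi
      have ha := hApos' i hi
      have hr2 : (-1:ℝ)^(n-i) * (A (x i) * P.eval (x i))
          = (-1:ℝ)^(n-i) * (-((x i - E) * Q.eval (x i))) := by rw [hr]
      by_contra hcon
      push_neg at hcon
      nlinarith [mul_nonneg ha.le hcon, hr2, mul_pos (show (0:ℝ) < x i - E by linarith) hq]
    have hdec : ∀ i, i + 1 < n → c (i+1) < c i := by
      intro i h
      rcases lt_or_eq_of_le (hcmono i h) with hlt | heq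
      · exact hlt
      · exfalso
        have p1 := parity i (by omega)
        have p2 := parity (i+1) (by omega)
        rw [heq] at p2
        rw [p2] at p1
        have hni : n - i = (n - (i+1)) + 1 := by omega
        rw [hni, pow_succ] at p1
        apply negOnePow_ne_neg (n - (i+1))
        linarith [p1]
    have hc0 : c 0 ≤ n - 1 := by
      have h1 := hcle 0
      have h2 : c 0 ≠ n := by
        intro h
        have := parity 0 (by omega)
        rw [h, Nat.sub_zero] at this
        exact negOnePow_ne_neg n this
      omega
    have hcval : ∀ i < n, c i = n - 1 - i := by
      intro i hi
      have hup : c i + i ≤ c 0 := by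
        have := chain_c n c hdec i 0 (by omega)
        simpa using this
      have hlow : c (n-1) + (n-1-i) ≤ c i := by
        have := chain_c n c hdec (n-1-i) i (by omega)
        have hi' : i + (n-1-i) = n-1 := by omega
        rwa [hi'] at this
      omega
    refine ⟨fun k => L.getD k 0, ?_, hrootiff, ?_, ?_⟩
    · intro i j hij hj
      have hi : i < n := by omega
      have h1 : L.getD i 0 < x i := by
        rw [hkey i hi i hi, hcval i hi]; omega
      have h2 : ¬ (L.getD j 0 < x i) := by
        rw [hkey i hi j hj, hcval i hi]; omega
      push_neg at h2
      have h3 : x i < L.getD j 0 := lt_of_le_of_ne h2 (Ne.symm (htne i hi j hj))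
      linarith
    · intro i hi
      rw [hkey i hi i hi, hcval i hi]; omega
    · intro i hi
      have hi1 : i + 1 < n := by omega
      have hi' : i < n := by omega
      have h2 : ¬ (L.getD (i+1) 0 < x i) := by
        rw [hkey i hi' (i+1) hi1, hcval i hi']; omega
      push_neg at h2
      exact lt_of_le_of_ne h2 (Ne.symm (htne i hi' (i+1) hi1))
  · -- Case x (n-1) < E
    intro hE
    have hxE : ∀ i < n, x i < E := by
      intro i hi
      rcases eq_or_lt_of_le (by omega : i ≤ n - 1) with h | h
      · rw [h]; exact hE
      · exact lt_trans (hx i (n-1) h (by omega)) hE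
    have parity : ∀ i < n, (-1:ℝ)^(c i) = (-1:ℝ)^(n - i) := by
      intro i hi
      apply sign_same (psign i hi)
      have hq := qsign i hi
      have hr := hrelx i hi
      have hxe := hxE i hi
      have ha := hApos' i hi
      have hr2 : (-1:ℝ)^(n-i) * (A (x i) * P.eval (x i))
          = (-1:ℝ)^(n-i) * (-((x i - E) * Q.eval (x i))) := by rw [hr]
      by_contra hcon
      push_neg at hcon
      nlinarith [mul_nonpos_of_nonneg_of_nonpos ha.le hcon, hr2,
        mul_pos (show (0:ℝ) < E - x i by linarith) hq]
    have hdec : ∀ i, i + 1 < n → c (i+1) < c i := by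
      intro i h
      rcases lt_or_eq_of_le (hcmono i h) with hlt | heq
      · exact hlt
      · exfalso
        have p1 := parity i (by omega)
        have p2 := parity (i+1) (by omega)
        rw [heq] at p2
        rw [p2] at p1
        have hni : n - i = (n - (i+1)) + 1 := by omega
        rw [hni, pow_succ] at p1
        apply negOnePow_ne_neg (n - (i+1))
        linarith [p1]
    have hclast : 1 ≤ c (n-1) := by
      by_contra h
      push_neg at h
      have h0 : c (n-1) = 0 := by omega
      have := parity (n-1) (by omega)
      rw [h0, pow_zero] at this
      have hni : n - (n-1) = 1 := by omega
      rw [hni, pow_one] at this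
      norm_num at this
    have hcval : ∀ i < n, c i = n - i := by
      intro i hi
      have hup : c i + i ≤ c 0 := by
        have := chain_c n c hdec i 0 (by omega)
        simpa using this
      have hlow : c (n-1) + (n-1-i) ≤ c i := by
        have := chain_c n c hdec (n-1-i) i (by omega)
        have hi' : i + (n-1-i) = n-1 := by omega
        rwa [hi'] at this
      have := hcle 0
      omega
    refine ⟨fun k => L.getD k 0, ?_, hrootiff, ?_, ?_⟩
    · intro i j hij hj
      have hi : i < n := by omega
      have hi1 : i + 1 < n := by omega
      have h1 : L.getD i 0 < x (i+1) := by
        rw [hkey (i+1) hi1 i hi, hcval (i+1) hi1]; omega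
      have h2 : ¬ (L.getD j 0 < x j) := by
        rw [hkey j hj j hj, hcval j hj]; omega
      push_neg at h2
      have h3 : x j < L.getD j 0 := lt_of_le_of_ne h2 (Ne.symm (htne j hj j hj))
      have h4 : x (i+1) ≤ x j := by
        rcases eq_or_lt_of_le (by omega : i + 1 ≤ j) with h | h
        · rw [h]
        · exact le_of_lt (hx (i+1) j h hj)
      linarith
    · intro i hi
      have h2 : ¬ (L.getD i 0 < x i) := by
        rw [hkey i hi i hi, hcval i hi]; omega
      push_neg at h2
      exact lt_of_le_of_ne h2 (Ne.symm (htne i hi i hi))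
    · intro i hi
      have hi1 : i + 1 < n := by omega
      have hi' : i < n := by omega
      rw [hkey (i+1) hi1 i hi', hcval (i+1) hi1]; omega
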